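/- The marginal density of β given the hierarchical prior β|ξ ~ DE(ξ), ξ ~ Gamma(a, 1/2) equals f(β) = (1 / (2^{(1+a)/2} Γ(a))) · |β|^{(a-1)/2} · K_{1-a}(√(2|β|)), where K_ν is the modified Bessel function of the second kind. -/
import Mathlib


/-- Density of the Laplace (double-exponential) distribution `DE(b)`. -/
noncomputable def laplacePDF (b y : ℝ) : ℝ := (2 * b)⁻¹ * Real.exp (-|y| / b)

/-- Density of the Gamma distribution with shape `a` and rate `1/2`. -/
noncomputable def gammaHalfPDF (a ξ : ℝ) : ℝ :=
  ((1 / 2 : ℝ) ^ a / Real.Gamma a) * ξ ^ (a - 1) * Real.exp (-ξ / 2)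

/-- The modified Bessel function of the second kind, via the standard integral
representation. -/
noncomputable def besselK (ν x : ℝ) : ℝ :=
  (1 / 2) * (x / 2) ^ ν * ∫ t in Set.Ioi (0 : ℝ), t ^ (-ν - 1) * Real.exp (-t - x ^ 2 / (4 * t))

/-- The marginal density of `β` under `β|ξ ~ DE(ξ)`, `ξ ~ Gamma(a, 1/2)` equals
`(1 / (2^{(1+a)/2} Γ(a))) |β|^{(a-1)/2} K_{1-a}(√(2|β|))`. -/
theorem marginal_density_DL (a β : ℝ) (ha : 0 < a) (hβ : β ≠ 0) :
    (∫ ξ in Set.Ioi (0 : ℝ), laplacePDF ξ β * gammaHalfPDF a ξ)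
      = (1 / ((2 : ℝ) ^ ((1 + a) / 2) * Real.Gamma a)) * |β| ^ ((a - 1) / 2) *
        besselK (1 - a) (Real.sqrt (2 * |β|)) := by
  have hc : 0 < |β| := abs_pos.mpr hβ
  have hΓ : Real.Gamma a ≠ 0 := (Real.Gamma_pos_of_pos ha).ne'
  set c := |β| with hcdef
  set g : ℝ → ℝ := fun t => t ^ (a - 2) * Real.exp (-t - c / (2 * t)) with hg
  -- Step 1: LHS
  have h1 : (∫ ξ in Set.Ioi (0 : ℝ), laplacePDF ξ β * gammaHalfPDF a ξ)
      = (1 / (4 * Real.Gamma a)) * ∫ t in Set.Ioi (0 : ℝ), g t := by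
    have hcong : ∀ ξ ∈ Set.Ioi (0 : ℝ), laplacePDF ξ β * gammaHalfPDF a ξ
        = (1 / (8 * Real.Gamma a)) * g ((1/2) * ξ) := by
      intro ξ hξ
      have hξ0 : (0:ℝ) < ξ := hξ
      simp only [laplacePDF, gammaHalfPDF, hg]
      have e1 : ((1/2 : ℝ) * ξ) ^ (a - 2) = (1/2 : ℝ) ^ (a-2) * ξ ^ (a-2) :=
        Real.mul_rpow (by norm_num) hξ0.le
      have e2 : ξ ^ (a - 1) = ξ ^ (a - 2) * ξ := by
        rw [← Real.rpow_add_one hξ0.ne']; ring_nf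
      have e3 : (1/2 : ℝ) ^ (a - 2) = (1/2 : ℝ) ^ a * 4 := by
        rw [Real.rpow_sub (by norm_num : (0:ℝ) < 1/2)]
        norm_num
        rw [div_eq_iff (by norm_num : (1/4 : ℝ) ≠ 0)]; ring
      have e4 : Real.exp (-((1:ℝ)/2 * ξ) - c / (2 * (1/2 * ξ)))
          = Real.exp (-|β| / ξ) * Real.exp (-ξ / 2) := by
        rw [← Real.exp_add, ← hcdef]
        congr 1
        field_simp
        ring
      rw [e1, e2, e3, e4]
      field_simp
      ring
    rw [MeasureTheory.setIntegral_congr_fun measurableSet_Ioi hcong,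
      MeasureTheory.integral_const_mul,
      MeasureTheory.integral_comp_mul_left_Ioi g 0 (by norm_num : (0:ℝ) < 1/2)]
    simp only [mul_zero, smul_eq_mul]
    ring
  rw [h1]
  -- Step 2: RHS
  unfold besselK
  have hx2 : Real.sqrt (2 * c) ^ 2 = 2 * c := Real.sq_sqrt (by positivity)
  have hinner : (∫ t in Set.Ioi (0 : ℝ),
      t ^ (-(1 - a) - 1) * Real.exp (-t - Real.sqrt (2 * c) ^ 2 / (4 * t)))
      = ∫ t in Set.Ioi (0 : ℝ), g t := by
    refine MeasureTheory.integral_congr_ae (Filter.Eventually.of_forall fun t => ?_)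
    simp only [hg, hx2]
    have h5 : -(1 - a) - 1 = a - 2 := by ring
    rw [h5, show (4:ℝ) * t = 2 * (2 * t) by ring,
      mul_div_mul_left c (2*t) (by norm_num : (2:ℝ) ≠ 0)]
  rw [hinner]
  -- constants
  have hkey : (1 / ((2 : ℝ) ^ ((1 + a) / 2) * Real.Gamma a)) * c ^ ((a - 1) / 2) *
      ((1/2 : ℝ) * (Real.sqrt (2 * c) / 2) ^ (1 - a)) = 1 / (4 * Real.Gamma a) := by
    have hs : Real.sqrt (2 * c) = (2 * c) ^ (1/2 : ℝ) := Real.sqrt_eq_rpow _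
    rw [hs, Real.div_rpow (Real.rpow_nonneg (by positivity) _) (by norm_num),
      ← Real.rpow_mul (by positivity : (0:ℝ) ≤ 2*c),
      Real.mul_rpow (by norm_num : (0:ℝ) ≤ 2) hc.le]
    have hc1 : c ^ ((a-1)/2) * c ^ ((1:ℝ)/2*(1-a)) = 1 := by
      rw [← Real.rpow_add hc, show (a-1)/2 + (1:ℝ)/2*(1-a) = 0 by ring, Real.rpow_zero]
    have hpow : (2:ℝ)^((1:ℝ)/2*(1-a)) / ((2:ℝ)^((1+a)/2) * (2:ℝ)^(1-a)) = 1/2 := by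
      rw [← Real.rpow_add two_pos, ← Real.rpow_sub two_pos,
        show (1:ℝ)/2*(1-a) - ((1+a)/2 + (1-a)) = -1 by ring, Real.rpow_neg_one]
      norm_num
    have hrw : 1 / ((2 : ℝ) ^ ((1 + a) / 2) * Real.Gamma a) * c ^ ((a - 1) / 2) *
        ((1/2 : ℝ) * ((2:ℝ)^((1:ℝ)/2*(1-a)) * c ^ ((1:ℝ)/2*(1-a)) / (2:ℝ)^(1-a)))
        = (c ^ ((a-1)/2) * c ^ ((1:ℝ)/2*(1-a))) *
          ((2:ℝ)^((1:ℝ)/2*(1-a)) / ((2:ℝ)^((1+a)/2) * (2:ℝ)^(1-a))) *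
          (1 / (2 * Real.Gamma a)) := by ring
    rw [hrw, hc1, hpow]
    ring
  calc (1 / (4 * Real.Gamma a)) * ∫ t in Set.Ioi (0:ℝ), g t
      = ((1 / ((2 : ℝ) ^ ((1 + a) / 2) * Real.Gamma a)) * c ^ ((a - 1) / 2) *
        ((1/2 : ℝ) * (Real.sqrt (2 * c) / 2) ^ (1 - a))) * ∫ t in Set.Ioi (0:ℝ), g t := by
        rw [hkey]
    _ = _ := by ring
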